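/- Let 𝒮 be a finite type with a distinguished element f, put C = {i : 𝒮 // i ≠ f}, let ℛ be a finite type with a bijection e : ℛ ≃ C, and let 𝕊 : Matrix 𝒮 ℛ ℝ be such that the square submatrix A : Matrix C C ℝ, A c c' = 𝕊 c.val (e.symm c'), is invertible. Suppose x : 𝒮 → ℝ satisfies x i > 0 for all i and Matrix.vecMul x 𝕊 = 0. Then the convex cone in (𝒮 → ℝ) generated by the columns of the matrix M = (𝕊.submatrix id e.symm) * A⁻¹ equals the set {w : 𝒮 → ℝ | w i ≥ 0 for every i ≠ f, and ∑ i, x i * w i = 0}. -/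
import Mathlib


open Matrix

/-- Theorem: for a minimal autocatalytic subnetwork with exactly one more
species (`f`) than its core set `C = {i // i ≠ f}`, and with a positive
conservation law `x`, the species-productive cone (the convex cone generated
by the columns of `M = 𝕊 · (𝕊_C)⁻¹`) equals the partition-productive cone
`{w | w i ≥ 0 for all i ≠ f, and ∑ i, x i * w i = 0}`. -/
theorem speciesProductiveCone_eq_partitionProductiveCone {𝒮 ℛ : Type*}
    [Fintype 𝒮] [DecidableEq 𝒮] [Fintype ℛ]
    (f : 𝒮) (e : ℛ ≃ {i : 𝒮 // i ≠ f}) (𝕊 : Matrix 𝒮 ℛ ℝ)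
    (A : Matrix {i : 𝒮 // i ≠ f} {i : 𝒮 // i ≠ f} ℝ)
    (hA : A = Matrix.of fun c c' => 𝕊 c.1 (e.symm c'))
    (hAunit : IsUnit A)
    (x : 𝒮 → ℝ) (hx : ∀ i, 0 < x i) (hcons : Matrix.vecMul x 𝕊 = 0)
    (M : Matrix 𝒮 {i : 𝒮 // i ≠ f} ℝ)
    (hM : M = (𝕊.submatrix id (fun c : {i : 𝒮 // i ≠ f} => (e.symm c : ℛ))) * A⁻¹) :
    {w : 𝒮 → ℝ | ∃ a : {i : 𝒮 // i ≠ f} → ℝ, (∀ c, 0 ≤ a c) ∧ w = M.mulVec a}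
      = {w : 𝒮 → ℝ | (∀ i : 𝒮, i ≠ f → 0 ≤ w i) ∧ ∑ i : 𝒮, x i * w i = 0} := by
  have hdet : IsUnit A.det := (Matrix.isUnit_iff_isUnit_det A).mp hAunit
  -- core rows of M form the identity
  have hMcore : ∀ (c : {i : 𝒮 // i ≠ f}) (c' : {i : 𝒮 // i ≠ f}),
      M c.1 c' = (1 : Matrix {i : 𝒮 // i ≠ f} {i : 𝒮 // i ≠ f} ℝ) c c' := by
    intro c c'
    have : M c.1 c' = (A * A⁻¹) c c' := by
      simp [hM, Matrix.mul_apply, hA]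
    rw [this, Matrix.mul_nonsing_inv A hdet]
  have hMulVecCore : ∀ (a : {i : 𝒮 // i ≠ f} → ℝ) (c : {i : 𝒮 // i ≠ f}),
      M.mulVec a c.1 = a c := by
    intro a c
    have : M.mulVec a c.1 = ∑ c', (1 : Matrix {i : 𝒮 // i ≠ f} {i : 𝒮 // i ≠ f} ℝ) c c' * a c' := by
      simp only [Matrix.mulVec, dotProduct]
      exact Finset.sum_congr rfl fun c' _ => by rw [hMcore c c']
    rw [this]
    simp [Matrix.one_apply]
  -- x annihilates M
  have hxM : Matrix.vecMul x M = 0 := by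
    have h1 : Matrix.vecMul x (𝕊.submatrix id (fun c : {i : 𝒮 // i ≠ f} => (e.symm c : ℛ))) = 0 := by
      funext c
      have : Matrix.vecMul x (𝕊.submatrix id (fun c : {i : 𝒮 // i ≠ f} => (e.symm c : ℛ))) c
          = Matrix.vecMul x 𝕊 (e.symm c) := by
        simp [Matrix.vecMul, dotProduct]
      rw [this, hcons]
      rfl
    rw [hM, ← Matrix.vecMul_vecMul, h1]
    simp
  have hsum : ∀ a : {i : 𝒮 // i ≠ f} → ℝ, ∑ i : 𝒮, x i * M.mulVec a i = 0 := by
    intro a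
    have : ∑ i : 𝒮, x i * M.mulVec a i = dotProduct x (M.mulVec a) := rfl
    rw [this, Matrix.dotProduct_mulVec, hxM]
    simp [dotProduct]
  ext w
  simp only [Set.mem_setOf_eq]
  constructor
  · rintro ⟨a, ha, rfl⟩
    refine ⟨fun i hi => ?_, hsum a⟩
    have := hMulVecCore a ⟨i, hi⟩
    simp only at this
    rw [this]
    exact ha _
  · rintro ⟨hw, hwsum⟩
    refine ⟨fun c => w c.1, fun c => hw c.1 c.2, ?_⟩
    funext i
    by_cases hi : i = f
    · subst hi
      -- use the conservation law to identify the i-component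
      set v := M.mulVec fun c => w c.1 with hv
      have hvcore : ∀ j, j ≠ i → v j = w j := by
        intro j hj
        exact hMulVecCore _ ⟨j, hj⟩
      have hsv : ∑ j : 𝒮, x j * v j = 0 := hsum _
      have hsplit : ∀ u : 𝒮 → ℝ, ∑ j : 𝒮, x j * u j
          = x i * u i + ∑ j ∈ Finset.univ.erase i, x j * u j := by
        intro u
        exact (Finset.add_sum_erase _ (fun j => x j * u j) (Finset.mem_univ i)).symm
      have heq : ∑ j ∈ Finset.univ.erase i, x j * v j
          = ∑ j ∈ Finset.univ.erase i, x j * w j := by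
        refine Finset.sum_congr rfl fun j hj => ?_
        rw [hvcore j (Finset.ne_of_mem_erase hj)]
      have h1 := hsplit v
      have h2 := hsplit w
      rw [hsv] at h1
      rw [hwsum] at h2
      rw [heq] at h1
      have : x i * v i = x i * w i := by linarith
      have := mul_left_cancel₀ (ne_of_gt (hx i)) this
      exact this.symm
    · exact (hMulVecCore (fun c => w c.1) ⟨i, hi⟩).symm
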